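/- Let n ≥ 2 and let χ(1) = |Ψ_n⟩⟨Ψ_n| − (I_n/n) ⊗ (I_n/n) be the correlation part of the maximally entangled state on ℂ^n ⊗ ℂ^n. If ρ is a density matrix on ℂ^n such that ρ ⊗ (I_n/n) + χ(1) is positive semidefinite, then ρ = I_n/n; i.e., the maximally mixed state is the unique compatible reduced system state. -/

import Mathlib

open Matrix
open scoped Kronecker ComplexOrder

/-- The maximally entangled state `Ψ_n = (1/√n) Σ_k e_k ⊗ e_k` on `ℂ^n ⊗ ℂ^n`. -/
noncomputable def maxEntVec (n : ℕ) : Fin n × Fin n → ℂ :=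
  fun p => if p.1 = p.2 then ((Real.sqrt n : ℂ))⁻¹ else 0

/-- The rank-one projection `|Ψ_n⟩⟨Ψ_n|`. -/
noncomputable def maxEntProj (n : ℕ) : Matrix (Fin n × Fin n) (Fin n × Fin n) ℂ :=
  Matrix.vecMulVec (maxEntVec n) (star (maxEntVec n))

/-- The maximally mixed state `I_n / n`. -/
noncomputable def maxMixed (n : ℕ) : Matrix (Fin n) (Fin n) ℂ := (n : ℂ)⁻¹ • 1

lemma aux_single_quad {n : Type*} [Fintype n] [DecidableEq n] (M : Matrix n n ℂ) (p : n) :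
    star (Pi.single p 1) ⬝ᵥ M *ᵥ Pi.single p 1 = M p p := by
  rw [mulVec_single_one]
  simp [dotProduct, Pi.single_apply, apply_ite]

lemma aux_col_zero {n : Type*} [Fintype n] [DecidableEq n] (M : Matrix n n ℂ) (hM : M.PosSemidef)
    (p q : n) (h : M q q = 0) : M p q = 0 := by
  have h2 : M *ᵥ Pi.single q 1 = 0 := by
    rw [← hM.dotProduct_mulVec_zero_iff, aux_single_quad]; exact h
  simpa using congrFun h2 p

theorem stmt1 (n : ℕ) (hn : 2 ≤ n)
    (ρ : Matrix (Fin n) (Fin n) ℂ) (hρ : ρ.PosSemidef) (hρtr : ρ.trace = 1)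
    (hpos : (ρ ⊗ₖ maxMixed n + (maxEntProj n - maxMixed n ⊗ₖ maxMixed n)).PosSemidef) :
    ρ = maxMixed n := by
  set M := ρ ⊗ₖ maxMixed n + (maxEntProj n - maxMixed n ⊗ₖ maxMixed n) with hMdef
  have hn0 : (0:ℝ) < n := by positivity
  have hnc : (n:ℂ) ≠ 0 := by exact_mod_cast hn0.ne'
  have hMapp : ∀ p q : Fin n × Fin n, M p q =
      ρ p.1 q.1 * ((n:ℂ)⁻¹ * (if p.2 = q.2 then 1 else 0)) +
      ((if p.1 = p.2 then ((Real.sqrt n : ℂ))⁻¹ else 0) *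
        (starRingEnd ℂ) (if q.1 = q.2 then ((Real.sqrt n : ℂ))⁻¹ else 0) -
      ((n:ℂ)⁻¹ * (if p.1 = q.1 then 1 else 0)) * ((n:ℂ)⁻¹ * (if p.2 = q.2 then 1 else 0))) := by
    intro p q
    simp [hMdef, Matrix.add_apply, Matrix.sub_apply, kroneckerMap_apply, maxMixed,
      maxEntProj, maxEntVec, vecMulVec_apply, Matrix.smul_apply, Matrix.one_apply, Pi.star_apply]
  -- off-diagonal diag entries of M
  have hdiagM : ∀ i j : Fin n, i ≠ j →
      M (i, j) (i, j) = ρ i i * (n:ℂ)⁻¹ - (n:ℂ)⁻¹ * (n:ℂ)⁻¹ := by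
    intro i j hij
    rw [hMapp]
    simp [hij]
    ring
  -- step 1 : diagonal of ρ equals 1/n
  have hdiag : ∀ i : Fin n, ρ i i = (n:ℂ)⁻¹ := by
    have hlb : ∀ i : Fin n, (n:ℝ)⁻¹ ≤ (ρ i i).re := by
      intro i
      have : Nontrivial (Fin n) := Fin.nontrivial_iff_two_le.mpr hn
      obtain ⟨j, hj⟩ : ∃ j : Fin n, j ≠ i := exists_ne i
      have h0 := hpos.dotProduct_mulVec_nonneg (Pi.single (i, j) 1)
      rw [aux_single_quad, hdiagM i j (Ne.symm hj)] at h0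
      have := (Complex.le_def.mp h0).1
      simp [Complex.sub_re, Complex.mul_re] at this
      nlinarith [this, sq_nonneg ((n:ℝ)⁻¹), inv_pos.mpr hn0]
    have hsum : ∑ i : Fin n, (ρ i i).re = 1 := by
      have : (ρ.trace).re = 1 := by rw [hρtr]; simp
      simpa [Matrix.trace, Matrix.diag, Complex.re_sum] using this
    have hcard : ∑ _i : Fin n, (n:ℝ)⁻¹ = 1 := by
      simp [Finset.sum_const]
      field_simp
    have heq : ∀ i : Fin n, (ρ i i).re = (n:ℝ)⁻¹ := by
      have h0 : ∑ i : Fin n, ((ρ i i).re - (n:ℝ)⁻¹) = 0 := by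
        rw [Finset.sum_sub_distrib, hsum, hcard, sub_self]
      intro i
      have := (Finset.sum_eq_zero_iff_of_nonneg (fun j _ => sub_nonneg.mpr (hlb j))).mp h0 i
        (Finset.mem_univ i)
      linarith [sub_eq_zero.mp this]
    intro i
    have him : (ρ i i).im = 0 := by
      have h0 := hρ.dotProduct_mulVec_nonneg (Pi.single i 1)
      rw [aux_single_quad] at h0
      exact (Complex.le_def.mp h0).2.symm
    apply Complex.ext
    · rw [heq i]; simp
    · rw [him]; simp
  -- step 2 : off-diagonal entries of ρ vanish
  have hoff : ∀ i k : Fin n, i ≠ k → ρ i k = 0 := by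
    intro i k hik
    have hqq : M (k, i) (k, i) = 0 := by
      rw [hdiagM k i (Ne.symm hik), hdiag k]; ring
    have h2 := aux_col_zero M hpos (i, i) (k, i) hqq
    rw [hMapp] at h2
    have h3 : ρ i k * (n:ℂ)⁻¹ = 0 := by simpa [hik, Ne.symm hik] using h2
    rcases mul_eq_zero.mp h3 with h | h
    · exact h
    · exact absurd h (by simpa using hnc)
  ext i k
  by_cases h : i = k
  · subst h
    simp [maxMixed, hdiag i, Matrix.smul_apply, Matrix.one_apply]
  · simp [maxMixed, hoff i k h, Matrix.smul_apply, Matrix.one_apply, h]
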